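/- Let Y_1, ..., Y_n be iid nonnegative random variables with b_1 = E Y_1 < ∞, and let I be a finite set of positive integers. Define b_1(I) = Σ_{j∈I} Y_j j^{-1/2} and let \tilde{Y}_j = Y_j 1_{Y_j ≤ ε² j}, \tilde{b} = Σ_{j∈I} \tilde{Y}_j j^{-1/2}. Then E|\tilde{b} − E\tilde{b}| ≤ ε b_1^{1/2} |I|^{1/2}. -/

import Mathlib

open MeasureTheory ProbabilityTheory Finset

/-- For iid nonnegative `Y_j` with mean `b₁`, a finite set `I` of positive integers and
`ε > 0`, the truncated sum `b̃ = ∑_{j∈I} Y_j 1_{Y_j ≤ ε² j} j^{-1/2}` satisfies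
`E|b̃ - E b̃| ≤ ε √b₁ √|I|`. -/
theorem stmt8 {Ω : Type*} [MeasurableSpace Ω] (μ : Measure Ω) [IsProbabilityMeasure μ]
    (Y : ℕ → Ω → ℝ) (hmeas : ∀ j, Measurable (Y j))
    (hnonneg : ∀ j ω, 0 ≤ Y j ω)
    (hindep : iIndepFun Y μ)
    (hident : ∀ j, IdentDistrib (Y j) (Y 1) μ μ)
    (hint : Integrable (Y 1) μ)
    (b₁ : ℝ) (hb₁ : b₁ = ∫ ω, Y 1 ω ∂μ)
    (I : Finset ℕ) (hI : ∀ j ∈ I, 0 < j) (ε : ℝ) (hε : 0 < ε) :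
    (∫ ω, |(∑ j ∈ I, (if Y j ω ≤ ε ^ 2 * j then Y j ω else 0) * (j : ℝ) ^ (-(1/2 : ℝ)))
        - ∫ ω', (∑ j ∈ I, (if Y j ω' ≤ ε ^ 2 * j then Y j ω' else 0) *
            (j : ℝ) ^ (-(1/2 : ℝ))) ∂μ| ∂μ)
      ≤ ε * Real.sqrt b₁ * Real.sqrt I.card := by
  classical
  set φ : ℕ → ℝ → ℝ := fun j x => (if x ≤ ε ^ 2 * j then x else 0) * (j : ℝ) ^ (-(1/2 : ℝ))
    with hφ
  have hφmeas : ∀ j, Measurable (φ j) := fun j =>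
    (Measurable.ite (measurableSet_le measurable_id measurable_const) measurable_id
      measurable_const).mul_const _
  set g : ℕ → Ω → ℝ := fun j => φ j ∘ Y j with hgdef
  have hgapp : ∀ j ω, g j ω =
      (if Y j ω ≤ ε ^ 2 * j then Y j ω else 0) * (j : ℝ) ^ (-(1/2 : ℝ)) := fun j ω => rfl
  have hgmeas : ∀ j, Measurable (g j) := fun j => (hφmeas j).comp (hmeas j)
  have hg_nonneg : ∀ j ω, 0 ≤ g j ω := by
    intro j ω
    rw [hgapp]
    apply mul_nonneg _ (Real.rpow_nonneg (Nat.cast_nonneg j) _)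
    split <;> [exact hnonneg j ω; exact le_rfl]
  have hg_bdd : ∀ j ω, g j ω ≤ ε ^ 2 * j * (j : ℝ) ^ (-(1/2 : ℝ)) := by
    intro j ω
    rw [hgapp]
    apply mul_le_mul_of_nonneg_right _ (Real.rpow_nonneg (Nat.cast_nonneg j) _)
    split
    · assumption
    · positivity
  have hgL2 : ∀ j, MemLp (g j) 2 μ := by
    intro j
    refine MemLp.of_bound (hgmeas j).aestronglyMeasurable (ε ^ 2 * j * (j : ℝ) ^ (-(1/2 : ℝ)))
      (Filter.Eventually.of_forall fun ω => ?_)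
    rw [Real.norm_of_nonneg (hg_nonneg j ω)]
    exact hg_bdd j ω
  set Z : Ω → ℝ := ∑ j ∈ I, g j with hZdef
  have hZapp : ∀ ω, Z ω = ∑ j ∈ I, g j ω := fun ω => by
    simp [hZdef, Finset.sum_apply]
  have hZL2 : MemLp Z 2 μ := memLp_finset_sum' _ fun j _ => hgL2 j
  have hb₁nonneg : 0 ≤ b₁ := by
    rw [hb₁]; exact integral_nonneg fun ω => hnonneg 1 ω
  -- Step 1: E|Z - EZ| ≤ sqrt (Var Z)
  have step1 : (∫ ω, |Z ω - ∫ ω', Z ω' ∂μ| ∂μ) ≤ Real.sqrt (variance Z μ) := by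
    have hZc : MemLp (fun ω => Z ω - ∫ ω', Z ω' ∂μ) 2 μ := hZL2.sub (memLp_const _)
    have h22 : Real.HolderConjugate 2 2 := Real.HolderConjugate.two_two
    have hCS := integral_mul_le_Lp_mul_Lq_of_nonneg (μ := μ) h22
      (f := fun ω => |Z ω - ∫ ω', Z ω' ∂μ|) (g := fun _ => (1 : ℝ))
      (Filter.Eventually.of_forall fun ω => abs_nonneg _)
      (Filter.Eventually.of_forall fun _ => zero_le_one)
      (by rw [show ENNReal.ofReal 2 = 2 by norm_num]; exact hZc.abs)
      (by rw [show ENNReal.ofReal 2 = 2 by norm_num]; exact memLp_const 1)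
    simp only [mul_one, Real.one_rpow, integral_const, measure_univ, ENNReal.toReal_one,
      smul_eq_mul, one_mul, Real.one_rpow, Real.rpow_two, sq_abs] at hCS
    rw [probReal_univ, one_pow, one_mul, Real.one_rpow, mul_one] at hCS
    refine hCS.trans (le_of_eq ?_)
    rw [Real.sqrt_eq_rpow]
    congr 1
    rw [variance_eq_integral hZL2.aemeasurable]
  -- Step 2: Var Z = sum of variances
  have step2 : variance Z μ = ∑ j ∈ I, variance (g j) μ := by
    rw [hZdef]
    refine IndepFun.variance_sum (fun j _ => hgL2 j) ?_
    intro i hi j hj hij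
    exact (hindep.indepFun hij).comp (hφmeas i) (hφmeas j)
  -- Step 3: each variance ≤ ε² b₁
  have step3 : ∀ j ∈ I, variance (g j) μ ≤ ε ^ 2 * b₁ := by
    intro j hj
    have hjpos := hI j hj
    have hjR : (0 : ℝ) < (j : ℝ) := by exact_mod_cast hjpos
    have hsq : ∀ ω, (g j ω) ^ 2 ≤ ε ^ 2 * Y j ω := by
      intro ω
      rw [hgapp]
      have hrp : ((j : ℝ) ^ (-(1/2 : ℝ))) ^ 2 = (j : ℝ)⁻¹ := by
        rw [← Real.rpow_two, ← Real.rpow_mul hjR.le]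
        norm_num
        exact Real.rpow_neg_one _
      rw [mul_pow, hrp]
      set t := if Y j ω ≤ ε ^ 2 * j then Y j ω else 0 with ht
      have ht_nonneg : 0 ≤ t := by rw [ht]; split <;> [exact hnonneg j ω; exact le_rfl]
      have ht_le : t ≤ Y j ω := by rw [ht]; split <;> [exact le_rfl; exact hnonneg j ω]
      have htsq : t ^ 2 ≤ ε ^ 2 * j * t := by
        rw [ht]
        split
        · rw [sq]
          exact mul_le_mul_of_nonneg_right (by assumption) (hnonneg j ω)
        · simp
      calc t ^ 2 * (j : ℝ)⁻¹ ≤ ε ^ 2 * j * t * (j : ℝ)⁻¹ :=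
            mul_le_mul_of_nonneg_right htsq (by positivity)
        _ = ε ^ 2 * t * ((j : ℝ) * (j : ℝ)⁻¹) := by ring
        _ = ε ^ 2 * t := by rw [mul_inv_cancel₀ hjR.ne', mul_one]
        _ ≤ ε ^ 2 * Y j ω := mul_le_mul_of_nonneg_left ht_le (sq_nonneg ε)
    have hYj : Integrable (Y j) μ := (hident j).integrable_iff.mpr hint
    calc variance (g j) μ ≤ μ[(g j) ^ 2] :=
          variance_le_expectation_sq (hgmeas j).aestronglyMeasurable
      _ = ∫ ω, (g j ω) ^ 2 ∂μ := by simp [Pi.pow_apply]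
      _ ≤ ∫ ω, ε ^ 2 * Y j ω ∂μ :=
          integral_mono (hgL2 j).integrable_sq (hYj.const_mul _) hsq
      _ = ε ^ 2 * ∫ ω, Y j ω ∂μ := integral_const_mul _ _
      _ = ε ^ 2 * b₁ := by rw [(hident j).integral_eq, ← hb₁]
  -- combine
  have hvar : variance Z μ ≤ I.card * (ε ^ 2 * b₁) := by
    rw [step2]
    calc ∑ j ∈ I, variance (g j) μ ≤ ∑ _j ∈ I, ε ^ 2 * b₁ := Finset.sum_le_sum step3
      _ = I.card * (ε ^ 2 * b₁) := by rw [Finset.sum_const, nsmul_eq_mul]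
  have hfinal : Real.sqrt (variance Z μ) ≤ ε * Real.sqrt b₁ * Real.sqrt I.card := by
    refine (Real.sqrt_le_sqrt hvar).trans (le_of_eq ?_)
    rw [Real.sqrt_mul (Nat.cast_nonneg _), Real.sqrt_mul (sq_nonneg ε),
      Real.sqrt_sq hε.le]
    ring
  have key := step1.trans hfinal
  have hZeq : ∀ ω, (∑ j ∈ I, (if Y j ω ≤ ε ^ 2 * j then Y j ω else 0) *
      (j : ℝ) ^ (-(1/2 : ℝ))) = Z ω := fun ω => by
    rw [hZapp]
    exact Finset.sum_congr rfl fun j _ => (hgapp j ω).symm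
  simpa only [hZeq] using key
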